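/- In the folded risk-sensitive MDP with good channel state (c = 1), the difference Δ ↦ Q̃_t(Δ,1;1) - Q̃_t(Δ,1;0) is non-increasing on [0,∞). Consequently, if transmitting is optimal at error level Δ (i.e., Q̃_t(Δ,1;1) ≤ Q̃_t(Δ,1;0)), then transmitting is optimal at every Δ' ≥ Δ; in particular there exists a threshold Δ*_t such that the optimal action at channel state 1 is to transmit if and only if Δ ≥ Δ*_t (threshold possibly +∞). -/

import Mathlib

open MeasureTheory Real Set

noncomputable def Kk (σ x : ℝ) : ℝ := Real.exp (-x ^ 2 / (2 * σ ^ 2))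

lemma Kk_even (σ x : ℝ) : Kk σ (-x) = Kk σ x := by simp [Kk]

lemma Kk_nonneg (σ x : ℝ) : 0 ≤ Kk σ x := (Real.exp_pos _).le

lemma Kk_le (σ : ℝ) (hσ : 0 < σ) {x y : ℝ} (h : x ^ 2 ≤ y ^ 2) :
    Kk σ y ≤ Kk σ x := by
  have h2 : (0:ℝ) < 2 * σ ^ 2 := by positivity
  exact Real.exp_le_exp.mpr ((div_le_div_iff_of_pos_right h2).mpr (by linarith))

lemma key_mono (σ : ℝ) (hσ : 0 < σ) (V : ℝ → ℝ) (hVmeas : Measurable V)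
    (hVnonneg : ∀ d, 0 ≤ V d) (hVmono : MonotoneOn V (Set.Ici 0))
    (hVint : ∀ m : ℝ, IntegrableOn
      (fun d => Real.exp (-(d - m) ^ 2 / (2 * σ ^ 2)) * V d) (Set.Ici (0:ℝ)))
    {s s' : ℝ} (hs : 0 ≤ s) (hss' : s ≤ s') :
    (∫ d in Set.Ici (0:ℝ),
        (Real.exp (-(d - s) ^ 2 / (2 * σ ^ 2)) + Real.exp (-(d + s) ^ 2 / (2 * σ ^ 2))) * V d)
      ≤ ∫ d in Set.Ici (0:ℝ),
        (Real.exp (-(d - s') ^ 2 / (2 * σ ^ 2)) + Real.exp (-(d + s') ^ 2 / (2 * σ ^ 2))) * V d := by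
  have hVintK : ∀ m : ℝ, IntegrableOn (fun d => Kk σ (d - m) * V d) (Set.Ici (0:ℝ)) :=
    fun m => hVint m
  -- Integrability of the even extension against shifted kernels
  have hH : ∀ t : ℝ, Integrable (fun u => Kk σ (u - t) * V |u|) := by
    intro t
    have h1 : IntegrableOn (fun u => Kk σ (u - t) * V |u|) (Ioi 0) := by
      refine ((hVintK t).mono_set Ioi_subset_Ici_self).congr_fun ?_ measurableSet_Ioi
      intro u hu
      simp [abs_of_pos (mem_Ioi.mp hu)]
    have h2 : IntegrableOn (fun u => Kk σ (u - t) * V |u|) (Iic 0) := by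
      have hneg : MeasurableEmbedding (fun x : ℝ => -x) :=
        (Homeomorph.neg ℝ).measurableEmbedding
      rw [← Measure.map_neg_eq_self (volume : Measure ℝ)]
      unfold IntegrableOn
      rw [hneg.restrict_map, hneg.integrable_map_iff]
      have hpre : ((fun x : ℝ => -x) ⁻¹' Iic 0) = Ici 0 := by
        ext x; simp
      rw [hpre]
      refine (hVintK (-t)).congr_fun ?_ measurableSet_Ici
      intro u hu
      simp only [Function.comp_apply, abs_neg, abs_of_nonneg (mem_Ici.mp hu)]
      rw [show (-u - t : ℝ) = -(u - -t) by ring, Kk_even]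
    exact integrableOn_univ.mp (by rw [← Set.Iic_union_Ioi (a := (0:ℝ))]; exact h2.union h1)
  -- Value of the folded integral as a full-line integral
  have hB : ∀ t : ℝ, (∫ d in Set.Ici (0:ℝ), (Kk σ (d - t) + Kk σ (d + t)) * V d)
      = ∫ u, Kk σ (u - t) * V |u| := by
    intro t
    have hIic : ∫ u in Iic (0:ℝ), Kk σ (u - t) * V |u|
        = ∫ u in Ioi (0:ℝ), Kk σ (u + t) * V u := by
      have hcong : ∀ u ∈ Iic (0:ℝ), Kk σ (u - t) * V |u|
          = (fun v => Kk σ (v + t) * V v) (-u) := by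
        intro u hu
        simp only
        rw [abs_of_nonpos (mem_Iic.mp hu), show (u - t : ℝ) = -(-u + t) by ring, Kk_even]
      rw [setIntegral_congr_fun measurableSet_Iic hcong,
        integral_comp_neg_Iic (0:ℝ) (fun v => Kk σ (v + t) * V v)]
      norm_num
    have hIoi : ∫ u in Ioi (0:ℝ), Kk σ (u - t) * V |u|
        = ∫ u in Ioi (0:ℝ), Kk σ (u - t) * V u :=
      setIntegral_congr_fun measurableSet_Ioi (fun u hu => by rw [abs_of_pos hu])
    have h1 : IntegrableOn (fun u => Kk σ (u + t) * V u) (Ioi 0) := by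
      have := (hVintK (-t)).mono_set Ioi_subset_Ici_self
      simpa [sub_neg_eq_add] using this
    have h2 : IntegrableOn (fun u => Kk σ (u - t) * V u) (Ioi 0) :=
      (hVintK t).mono_set Ioi_subset_Ici_self
    rw [← intervalIntegral.integral_Iic_add_Ioi ((hH t).integrableOn) ((hH t).integrableOn), hIic, hIoi,
      integral_Ici_eq_integral_Ioi, ← integral_add h1 h2]
    refine setIntegral_congr_fun measurableSet_Ioi (fun d hd => by ring)
  -- The difference integrand
  set M : ℝ := (s + s') / 2 with hMdef
  have h2M : 2 * M = s + s' := by rw [hMdef]; ring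
  have hM0 : 0 ≤ M := by rw [hMdef]; linarith
  set g : ℝ → ℝ := fun u => (Kk σ (u - s') - Kk σ (u - s)) * V |u| with hg
  have hgeq : g = fun u => Kk σ (u - s') * V |u| - Kk σ (u - s) * V |u| := by
    funext u; rw [hg]; ring
  have hgint : Integrable g := by rw [hgeq]; exact (hH s').sub (hH s)
  have hcomp : Integrable (fun u => g (2 * M - u)) := hgint.comp_sub_left (2 * M)
  have hrefl : (∫ u, g (2 * M - u)) = ∫ u, g u := integral_sub_left_eq_self g _ (2 * M)
  -- pointwise nonnegativity of the symmetrized integrand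
  have hsum : ∀ u : ℝ, g u + g (2 * M - u)
      = (Kk σ (u - s') - Kk σ (u - s)) * (V |u| - V |2 * M - u|) := by
    intro u
    have e1 : Kk σ (2 * M - u - s') = Kk σ (u - s) := by
      rw [show (2 * M - u - s' : ℝ) = -(u - (2 * M - s')) by ring, Kk_even, h2M]
      ring_nf
    have e2 : Kk σ (2 * M - u - s) = Kk σ (u - s') := by
      rw [show (2 * M - u - s : ℝ) = -(u - (2 * M - s)) by ring, Kk_even, h2M]
      ring_nf
    simp only [hg, e1, e2]
    ring
  have hptwise : ∀ u : ℝ, 0 ≤ g u + g (2 * M - u) := by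
    intro u
    rw [hsum u]
    rcases le_total M u with hMu | hMu
    · have hK : Kk σ (u - s) ≤ Kk σ (u - s') := Kk_le σ hσ (by nlinarith)
      have habs : |2 * M - u| ≤ |u| := sq_le_sq.mp (by nlinarith)
      have hV : V |2 * M - u| ≤ V |u| := hVmono (mem_Ici.mpr (abs_nonneg _)) (mem_Ici.mpr (abs_nonneg _)) habs
      exact mul_nonneg (sub_nonneg.mpr hK) (sub_nonneg.mpr hV)
    · have hK : Kk σ (u - s') ≤ Kk σ (u - s) := Kk_le σ hσ (by nlinarith)
      have habs : |u| ≤ |2 * M - u| := sq_le_sq.mp (by nlinarith)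
      have hV : V |u| ≤ V |2 * M - u| := hVmono (mem_Ici.mpr (abs_nonneg _)) (mem_Ici.mpr (abs_nonneg _)) habs
      nlinarith [sub_nonpos.mpr hK, sub_nonpos.mpr hV]
  have hD : 0 ≤ ∫ u, g u := by
    have h0 : 0 ≤ (∫ u, g u) + ∫ u, g (2 * M - u) := by
      rw [← integral_add hgint hcomp]
      exact integral_nonneg hptwise
    rw [hrefl] at h0; linarith
  have hsplit : (∫ u, g u)
      = (∫ u, Kk σ (u - s') * V |u|) - ∫ u, Kk σ (u - s) * V |u| := by
    rw [hgeq]; exact integral_sub (hH s') (hH s)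
  show (∫ d in Set.Ici (0:ℝ), (Kk σ (d - s) + Kk σ (d + s)) * V d)
      ≤ ∫ d in Set.Ici (0:ℝ), (Kk σ (d - s') + Kk σ (d + s')) * V d
  rw [hB s, hB s']
  linarith [hsplit, hD]

theorem stmt_6 (a σ γ lam : ℝ) (ha : 0 ≤ a) (hσ : 0 < σ) (hγ : 0 < γ) (hlam : 0 < lam)
    (p : Fin 2 → ℝ) (hp : ∀ c, 0 ≤ p c) (hp1 : p 0 + p 1 = 1)
    (Vprev : ℝ → Fin 2 → ℝ)
    (hVmeas : ∀ c, Measurable (fun d => Vprev d c))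
    (hVnonneg : ∀ d c, 0 ≤ Vprev d c)
    (hVmono : ∀ c, MonotoneOn (fun d => Vprev d c) (Set.Ici (0 : ℝ)))
    (hVint : ∀ (c : Fin 2) (m : ℝ),
      IntegrableOn (fun d => Real.exp (-(d - m)^2 / (2 * σ^2)) * Vprev d c) (Set.Ici (0 : ℝ)))
    (Q : ℝ → Fin 2 → ℝ)
    (hQ0 : ∀ Δ, Q Δ 0 =
      Real.exp (γ * Δ^2) * ∑ cp : Fin 2, p cp *
        ∫ dp in Set.Ici (0 : ℝ),
          (Real.exp (-(dp - a * Δ)^2 / (2 * σ^2)) + Real.exp (-(dp + a * Δ)^2 / (2 * σ^2)))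
            * Vprev dp cp)
    (hQ1 : ∀ Δ, Q Δ 1 =
      2 * Real.exp (γ * lam) * ∑ cp : Fin 2, p cp *
        ∫ dp in Set.Ici (0 : ℝ), Real.exp (-(dp)^2 / (2 * σ^2)) * Vprev dp cp) :
    AntitoneOn (fun Δ => Q Δ 1 - Q Δ 0) (Set.Ici (0 : ℝ)) ∧
    (∀ Δ Δ' : ℝ, 0 ≤ Δ → Δ ≤ Δ' → Q Δ 1 ≤ Q Δ 0 → Q Δ' 1 ≤ Q Δ' 0) ∧
    (∃ Δstar : EReal, ∀ Δ : ℝ, 0 ≤ Δ →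
      (Δstar < (Δ : EReal) → Q Δ 1 ≤ Q Δ 0) ∧ (Q Δ 1 ≤ Q Δ 0 → Δstar ≤ (Δ : EReal))) := by
  -- the integrals appearing in Q · 0
  set I : Fin 2 → ℝ → ℝ := fun c Δ =>
    ∫ dp in Set.Ici (0 : ℝ),
      (Real.exp (-(dp - a * Δ)^2 / (2 * σ^2)) + Real.exp (-(dp + a * Δ)^2 / (2 * σ^2)))
        * Vprev dp c with hI
  have hInonneg : ∀ c Δ, 0 ≤ I c Δ := by
    intro c Δ
    refine setIntegral_nonneg measurableSet_Ici (fun d _ => ?_)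
    exact mul_nonneg (by positivity) (hVnonneg d c)
  have hImono : ∀ (c : Fin 2) {Δ Δ' : ℝ}, 0 ≤ Δ → Δ ≤ Δ' → I c Δ ≤ I c Δ' := by
    intro c Δ Δ' hΔ hΔΔ'
    exact key_mono σ hσ (fun d => Vprev d c) (hVmeas c) (fun d => hVnonneg d c)
      (hVmono c) (hVint c) (mul_nonneg ha hΔ) (mul_le_mul_of_nonneg_left hΔΔ' ha)
  have hQ0mono : ∀ {Δ Δ' : ℝ}, 0 ≤ Δ → Δ ≤ Δ' → Q Δ 0 ≤ Q Δ' 0 := by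
    intro Δ Δ' hΔ hΔΔ'
    rw [hQ0 Δ, hQ0 Δ']
    have hsum : ∀ Δ₀ : ℝ, (∑ cp : Fin 2, p cp * I cp Δ₀) = p 0 * I 0 Δ₀ + p 1 * I 1 Δ₀ :=
      fun Δ₀ => Fin.sum_univ_two _
    have hexp : Real.exp (γ * Δ^2) ≤ Real.exp (γ * Δ'^2) := by
      apply Real.exp_le_exp.mpr
      apply mul_le_mul_of_nonneg_left _ hγ.le
      exact pow_le_pow_left₀ hΔ hΔΔ' 2
    have hsle : (∑ cp : Fin 2, p cp * I cp Δ) ≤ ∑ cp : Fin 2, p cp * I cp Δ' := by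
      rw [hsum, hsum]
      have h0 := mul_le_mul_of_nonneg_left (hImono 0 hΔ hΔΔ') (hp 0)
      have h1 := mul_le_mul_of_nonneg_left (hImono 1 hΔ hΔΔ') (hp 1)
      linarith
    have hsnn : 0 ≤ ∑ cp : Fin 2, p cp * I cp Δ := by
      rw [hsum]
      have := mul_nonneg (hp 0) (hInonneg 0 Δ)
      have := mul_nonneg (hp 1) (hInonneg 1 Δ)
      linarith
    exact mul_le_mul hexp hsle hsnn (Real.exp_pos _).le
  have hQ1const : ∀ Δ Δ' : ℝ, Q Δ 1 = Q Δ' 1 := fun Δ Δ' => (hQ1 Δ).trans (hQ1 Δ').symm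
  have hAnti : AntitoneOn (fun Δ => Q Δ 1 - Q Δ 0) (Set.Ici (0 : ℝ)) := by
    intro Δ hΔ Δ' hΔ' hΔΔ'
    simp only
    rw [hQ1const Δ' Δ]
    exact sub_le_sub_left (hQ0mono (mem_Ici.mp hΔ) hΔΔ') _
  have hPart2 : ∀ Δ Δ' : ℝ, 0 ≤ Δ → Δ ≤ Δ' → Q Δ 1 ≤ Q Δ 0 → Q Δ' 1 ≤ Q Δ' 0 := by
    intro Δ Δ' hΔ hΔΔ' hQle
    have h := hAnti (mem_Ici.mpr hΔ) (mem_Ici.mpr (hΔ.trans hΔΔ')) hΔΔ'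
    simp only at h
    linarith
  refine ⟨hAnti, hPart2, ?_⟩
  refine ⟨sInf (Real.toEReal '' {d : ℝ | 0 ≤ d ∧ Q d 1 ≤ Q d 0}), fun Δ hΔ => ⟨?_, ?_⟩⟩
  · intro hlt
    rw [sInf_lt_iff] at hlt
    obtain ⟨x, hx, hxlt⟩ := hlt
    obtain ⟨d, ⟨hd0, hdQ⟩, rfl⟩ := hx
    have hdΔ : d ≤ Δ := by exact_mod_cast hxlt.le
    exact hPart2 d Δ hd0 hdΔ hdQ
  · intro h
    exact sInf_le ⟨Δ, ⟨hΔ, h⟩, rfl⟩
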